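/- Set p_0 = 3/4 and ε = 1/(4√n). For each of the three pairs (c, α) given by: (i) c(p) = 1 − p² − (1−p)² with α = 1 (ℓ2² distance); (ii) c(p) = 2√(p(1−p)) with α = 1/2 (ℓ1 distance); (iii) c(p) = √(1/p − 1) + √(1/(1−p) − 1) with α = 1/2 (separation distance); there exist a constant κ > 0 and an integer n_0 such that for all n ≥ n_0 and every adaptive allocation scheme with budget n, the maximum over the two problem instances P_1 = (Bernoulli(p_0), Bernoulli(p_0−ε)) and P_2 = (Bernoulli(p_0−ε), Bernoulli(p_0)) of max_{i∈{1,2}} E[ |T_i − T̃_i*| ] is at least κ√n, where T̃_i* = n·c_i^{1/α}/(c_1^{1/α} + c_2^{1/α}) is the approx-oracle allocation of the corresponding instance. -/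

import Mathlib

open Finset

/-- The arm chosen at round `t` by the adaptive scheme `π` on the outcome
sequence `ω`: `π` sees only the strict prefix of outcomes before round `t`. -/
def chosenArm (π : (t : ℕ) → (Fin t → Bool) → Fin 2) {n : ℕ}
    (ω : Fin n → Bool) (t : Fin n) : Fin 2 :=
  π t.1 (fun s : Fin t.1 => ω ⟨s.1, s.2.trans t.2⟩)

/-- The probability mass of a full outcome sequence `ω ∈ {0,1}^n` under the
two-armed Bernoulli instance with parameters `θ` and the adaptive scheme `π`. -/
def seqProb (θ : Fin 2 → ℝ) (π : (t : ℕ) → (Fin t → Bool) → Fin 2) {n : ℕ}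
    (ω : Fin n → Bool) : ℝ :=
  ∏ t : Fin n, (if ω t then θ (chosenArm π ω t) else 1 - θ (chosenArm π ω t))

/-- `T_i(ω)`: the total number of rounds in which arm `i` is chosen. -/
def pulls (π : (t : ℕ) → (Fin t → Bool) → Fin 2) {n : ℕ}
    (ω : Fin n → Bool) (i : Fin 2) : ℕ :=
  (Finset.univ.filter (fun t => chosenArm π ω t = i)).card

/-- `E[|T_i − target|]` under the instance `θ` with scheme `π` and budget `n`. -/
noncomputable def expDev (θ : Fin 2 → ℝ) (π : (t : ℕ) → (Fin t → Bool) → Fin 2)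
    (n : ℕ) (i : Fin 2) (target : ℝ) : ℝ :=
  ∑ ω : Fin n → Bool, seqProb θ π ω * |(pulls π ω i : ℝ) - target|

/-- With `p₀ = 3/4` and `ε = 1/(4√n)`, the maximum over the two instances
`P₁ = (Ber(p₀), Ber(p₀−ε))`, `P₂ = (Ber(p₀−ε), Ber(p₀))` and the two arms of the
expected deviation `E[|T_i − T̃_i*|]` from the approx-oracle allocation
`T̃_i* = n c_i^{1/α}/(c₁^{1/α}+c₂^{1/α})` for the objective parameter map `c`. -/
noncomputable def worstDev (c : ℝ → ℝ) (α : ℝ) (n : ℕ)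
    (π : (t : ℕ) → (Fin t → Bool) → Fin 2) : ℝ :=
  let p0 : ℝ := 3 / 4
  let ε : ℝ := 1 / (4 * Real.sqrt n)
  let θ1 : Fin 2 → ℝ := ![p0, p0 - ε]
  let θ2 : Fin 2 → ℝ := ![p0 - ε, p0]
  let D : ℝ := c p0 ^ (1 / α) + c (p0 - ε) ^ (1 / α)
  max
    (max (expDev θ1 π n 0 ((n : ℝ) * c p0 ^ (1 / α) / D))
         (expDev θ1 π n 1 ((n : ℝ) * c (p0 - ε) ^ (1 / α) / D)))
    (max (expDev θ2 π n 0 ((n : ℝ) * c (p0 - ε) ^ (1 / α) / D))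
         (expDev θ2 π n 1 ((n : ℝ) * c p0 ^ (1 / α) / D)))

lemma chosenArm_snoc (π : (t : ℕ) → (Fin t → Bool) → Fin 2) {n : ℕ}
    (ω : Fin n → Bool) (b : Bool) (t : Fin n) :
    chosenArm π (Fin.snoc ω b) t.castSucc = chosenArm π ω t := by
  unfold chosenArm
  congr 1
  funext s
  have hs : s.1 < n := s.2.trans t.2
  simp [Fin.snoc, hs]

lemma chosenArm_last (π : (t : ℕ) → (Fin t → Bool) → Fin 2) {n : ℕ}
    (ω : Fin n → Bool) (b : Bool) :
    chosenArm π (Fin.snoc ω b) (Fin.last n) = π n ω := by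
  unfold chosenArm
  congr 1
  funext s
  simp [Fin.snoc, s.2]

lemma sum_prod_g (g : Fin 2 → Bool → ℝ) (ρ : ℝ) (hg : ∀ i, g i true + g i false = ρ) :
    ∀ (n : ℕ) (π : (t : ℕ) → (Fin t → Bool) → Fin 2),
      ∑ ω : Fin n → Bool, ∏ t : Fin n, g (chosenArm π ω t) (ω t) = ρ ^ n := by
  intro n
  induction n with
  | zero => intro π; simp
  | succ n ih =>
    intro π
    rw [← Equiv.sum_comp (Fin.snocEquiv (fun _ : Fin (n+1) => Bool))
        (fun ω => ∏ t : Fin (n+1), g (chosenArm π ω t) (ω t)), Fintype.sum_prod_type,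
        Finset.sum_comm]
    have step : ∀ (ω : Fin n → Bool) (b : Bool),
        (∏ t : Fin (n+1), g (chosenArm π (Fin.snoc ω b : Fin (n+1) → Bool) t)
            ((Fin.snoc ω b : Fin (n+1) → Bool) t))
        = (∏ t : Fin n, g (chosenArm π ω t) (ω t)) * g (π n ω) b := by
      intro ω b
      rw [Fin.prod_univ_castSucc]
      congr 1
      · exact Finset.prod_congr rfl fun t _ => by rw [chosenArm_snoc, Fin.snoc_castSucc]
      · rw [chosenArm_last, Fin.snoc_last]
    have he : ∀ (ω : Fin n → Bool) (b : Bool),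
        (Fin.snocEquiv (fun _ : Fin (n+1) => Bool)) (b, ω) = (Fin.snoc ω b : Fin (n+1) → Bool) := by
      intro ω b; funext i; rfl
    calc ∑ ω : Fin n → Bool, ∑ b : Bool,
          (fun ω' => ∏ t : Fin (n+1), g (chosenArm π ω' t) (ω' t))
            ((Fin.snocEquiv (fun _ : Fin (n+1) => Bool)) (b, ω))
        = ∑ ω : Fin n → Bool, (∏ t : Fin n, g (chosenArm π ω t) (ω t)) * ρ := by
          refine Finset.sum_congr rfl fun ω _ => ?_
          simp only [he, step]
          rw [Fintype.sum_bool, ← mul_add, hg]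
      _ = ρ ^ (n + 1) := by rw [← Finset.sum_mul, ih π, pow_succ]

lemma sqrt_prod' {ι : Type*} (s : Finset ι) (f : ι → ℝ) (h : ∀ i ∈ s, 0 ≤ f i) :
    Real.sqrt (∏ i ∈ s, f i) = ∏ i ∈ s, Real.sqrt (f i) := by
  induction s using Finset.cons_induction with
  | empty => simp
  | cons a s ha ih =>
    rw [Finset.prod_cons, Finset.prod_cons, Real.sqrt_mul (h a (Finset.mem_cons_self a s)),
      ih (fun i hi => h i (Finset.mem_cons_of_mem hi))]

lemma sum_seqProb {n : ℕ} (θ : Fin 2 → ℝ) (π : (t : ℕ) → (Fin t → Bool) → Fin 2) :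
    ∑ ω : Fin n → Bool, seqProb θ π ω = 1 := by
  have h := sum_prod_g (fun i b => if b then θ i else 1 - θ i) 1 (fun i => by simp) n π
  simpa [seqProb] using h

lemma seqProb_nonneg {n : ℕ} (θ : Fin 2 → ℝ) (h : ∀ i, 0 ≤ θ i ∧ θ i ≤ 1)
    (π : (t : ℕ) → (Fin t → Bool) → Fin 2) (ω : Fin n → Bool) :
    0 ≤ seqProb θ π ω := by
  refine Finset.prod_nonneg fun t _ => ?_
  by_cases hb : ω t
  · rw [if_pos hb]; exact (h _).1
  · rw [if_neg hb]; linarith [(h (chosenArm π ω t)).2]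

lemma sum_sqrt_seqProb {n : ℕ} (θ1 θ2 : Fin 2 → ℝ)
    (h1 : ∀ i, 0 ≤ θ1 i ∧ θ1 i ≤ 1) (h2 : ∀ i, 0 ≤ θ2 i ∧ θ2 i ≤ 1)
    (ρ : ℝ)
    (hρ : ∀ i, Real.sqrt (θ1 i * θ2 i) + Real.sqrt ((1 - θ1 i) * (1 - θ2 i)) = ρ)
    (π : (t : ℕ) → (Fin t → Bool) → Fin 2) :
    ∑ ω : Fin n → Bool, Real.sqrt (seqProb θ1 π ω * seqProb θ2 π ω) = ρ ^ n := by
  have key := sum_prod_g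
    (fun i b => if b then Real.sqrt (θ1 i * θ2 i) else Real.sqrt ((1 - θ1 i) * (1 - θ2 i)))
    ρ (fun i => by simpa using hρ i) n π
  rw [← key]
  refine Finset.sum_congr rfl fun ω _ => ?_
  unfold seqProb
  rw [← Finset.prod_mul_distrib, sqrt_prod']
  · refine Finset.prod_congr rfl fun t _ => ?_
    by_cases hb : ω t <;> simp [hb]
  · intro t _
    by_cases hb : ω t
    · simp only [if_pos hb]
      exact mul_nonneg (h1 _).1 (h2 _).1
    · simp only [if_neg hb]
      have := (h1 (chosenArm π ω t)).2
      have := (h2 (chosenArm π ω t)).2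
      exact mul_nonneg (by linarith) (by linarith)

lemma key_ineq {n : ℕ} (θ1 θ2 : Fin 2 → ℝ)
    (h1 : ∀ i, 0 ≤ θ1 i ∧ θ1 i ≤ 1) (h2 : ∀ i, 0 ≤ θ2 i ∧ θ2 i ≤ 1)
    (ρ : ℝ)
    (hρ : ∀ i, Real.sqrt (θ1 i * θ2 i) + Real.sqrt ((1 - θ1 i) * (1 - θ2 i)) = ρ)
    (π : (t : ℕ) → (Fin t → Bool) → Fin 2) (ta tb : ℝ) :
    (ρ ^ n) ^ 2 / 2 * |ta - tb| ≤ expDev θ1 π n 0 ta + expDev θ2 π n 0 tb := by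
  set p1 : (Fin n → Bool) → ℝ := fun ω => seqProb θ1 π ω with hp1
  set p2 : (Fin n → Bool) → ℝ := fun ω => seqProb θ2 π ω with hp2
  have hp1n : ∀ ω, 0 ≤ p1 ω := fun ω => seqProb_nonneg θ1 h1 π ω
  have hp2n : ∀ ω, 0 ≤ p2 ω := fun ω => seqProb_nonneg θ2 h2 π ω
  -- ∑ min ≥ (ρ^n)^2/2
  have hCS := Finset.sum_mul_sq_le_sq_mul_sq Finset.univ
    (fun ω : Fin n → Bool => Real.sqrt (min (p1 ω) (p2 ω)))
    (fun ω : Fin n → Bool => Real.sqrt (max (p1 ω) (p2 ω)))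
  have hBC : ∑ ω : Fin n → Bool, Real.sqrt (min (p1 ω) (p2 ω)) * Real.sqrt (max (p1 ω) (p2 ω))
      = ρ ^ n := by
    rw [← sum_sqrt_seqProb θ1 θ2 h1 h2 ρ hρ π]
    refine Finset.sum_congr rfl fun ω _ => ?_
    rw [← Real.sqrt_mul (le_min (hp1n ω) (hp2n ω)), min_mul_max]
  have hmin_sq : ∀ ω : Fin n → Bool, Real.sqrt (min (p1 ω) (p2 ω)) ^ 2 = min (p1 ω) (p2 ω) :=
    fun ω => Real.sq_sqrt (le_min (hp1n ω) (hp2n ω))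
  have hmax_sq : ∀ ω : Fin n → Bool, Real.sqrt (max (p1 ω) (p2 ω)) ^ 2 = max (p1 ω) (p2 ω) :=
    fun ω => Real.sq_sqrt (le_max_of_le_left (hp1n ω))
  have hsum_max : ∑ ω : Fin n → Bool, max (p1 ω) (p2 ω) ≤ 2 := by
    have : ∑ ω : Fin n → Bool, max (p1 ω) (p2 ω)
        ≤ ∑ ω : Fin n → Bool, (p1 ω + p2 ω) :=
      Finset.sum_le_sum fun ω _ =>
        max_le (le_add_of_nonneg_right (hp2n ω)) (le_add_of_nonneg_left (hp1n ω))
    rw [Finset.sum_add_distrib, sum_seqProb θ1 π, sum_seqProb θ2 π] at this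
    linarith
  have hmin_lb : (ρ ^ n) ^ 2 / 2 ≤ ∑ ω : Fin n → Bool, min (p1 ω) (p2 ω) := by
    rw [hBC] at hCS
    simp only [hmin_sq, hmax_sq] at hCS
    have hminnn : 0 ≤ ∑ ω : Fin n → Bool, min (p1 ω) (p2 ω) :=
      Finset.sum_nonneg fun ω _ => le_min (hp1n ω) (hp2n ω)
    nlinarith
  -- pointwise bound
  have hpt : ∀ ω : Fin n → Bool,
      min (p1 ω) (p2 ω) * |ta - tb|
        ≤ p1 ω * |(pulls π ω 0 : ℝ) - ta| + p2 ω * |(pulls π ω 0 : ℝ) - tb| := by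
    intro ω
    have htri : |ta - tb| ≤ |(pulls π ω 0 : ℝ) - ta| + |(pulls π ω 0 : ℝ) - tb| := by
      have := abs_sub_le ta ((pulls π ω 0 : ℝ)) tb
      rw [abs_sub_comm ta ((pulls π ω 0 : ℝ))] at this
      linarith
    have hmn : 0 ≤ min (p1 ω) (p2 ω) := le_min (hp1n ω) (hp2n ω)
    calc min (p1 ω) (p2 ω) * |ta - tb|
        ≤ min (p1 ω) (p2 ω) * (|(pulls π ω 0 : ℝ) - ta| + |(pulls π ω 0 : ℝ) - tb|) :=
          mul_le_mul_of_nonneg_left htri hmn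
      _ = min (p1 ω) (p2 ω) * |(pulls π ω 0 : ℝ) - ta|
          + min (p1 ω) (p2 ω) * |(pulls π ω 0 : ℝ) - tb| := by ring
      _ ≤ p1 ω * |(pulls π ω 0 : ℝ) - ta| + p2 ω * |(pulls π ω 0 : ℝ) - tb| := by
          gcongr
          · exact min_le_left _ _
          · exact min_le_right _ _
  calc (ρ ^ n) ^ 2 / 2 * |ta - tb|
      ≤ (∑ ω : Fin n → Bool, min (p1 ω) (p2 ω)) * |ta - tb| :=
        mul_le_mul_of_nonneg_right hmin_lb (abs_nonneg _)
    _ = ∑ ω : Fin n → Bool, min (p1 ω) (p2 ω) * |ta - tb| := Finset.sum_mul ..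
    _ ≤ ∑ ω : Fin n → Bool, (p1 ω * |(pulls π ω 0 : ℝ) - ta|
          + p2 ω * |(pulls π ω 0 : ℝ) - tb|) := Finset.sum_le_sum fun ω _ => hpt ω
    _ = expDev θ1 π n 0 ta + expDev θ2 π n 0 tb := by
        rw [Finset.sum_add_distrib]; rfl


lemma sep_sq (p : ℝ) (h0 : 0 < p) (h1 : p < 1) :
    (Real.sqrt (1/p - 1) + Real.sqrt (1/(1-p) - 1))^2 = 1/(p*(1-p)) := by
  have hp1 : (0:ℝ) < 1 - p := by linarith
  have hx : (0:ℝ) ≤ 1/p - 1 := by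
    rw [le_sub_iff_add_le, zero_add, le_div_iff₀ h0]; linarith
  have hy : (0:ℝ) ≤ 1/(1-p) - 1 := by
    rw [le_sub_iff_add_le, zero_add, le_div_iff₀ hp1]; linarith
  have hxy : (1/p - 1) * (1/(1-p) - 1) = 1 := by field_simp; ring
  rw [add_sq, Real.sq_sqrt hx, Real.sq_sqrt hy, mul_assoc, ← Real.sqrt_mul hx, hxy,
    Real.sqrt_one]
  field_simp
  ring

set_option maxHeartbeats 1000000 in
lemma worst_bound (c : ℝ → ℝ) (α : ℝ) (n : ℕ) (hn : 1 ≤ n)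
    (π : (t : ℕ) → (Fin t → Bool) → Fin 2) :
    9/40 * |(n : ℝ) * c (3/4) ^ (1/α) / (c (3/4) ^ (1/α) + c (3/4 - 1/(4*Real.sqrt n)) ^ (1/α))
      - (n : ℝ) * c (3/4 - 1/(4*Real.sqrt n)) ^ (1/α)
          / (c (3/4) ^ (1/α) + c (3/4 - 1/(4*Real.sqrt n)) ^ (1/α))|
      ≤ worstDev c α n π := by
  set s : ℝ := Real.sqrt n with hsdef
  have hs1 : 1 ≤ s := by
    rw [hsdef, show (1:ℝ) = Real.sqrt 1 by simp]
    exact Real.sqrt_le_sqrt (by exact_mod_cast hn)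
  have hs0 : 0 < s := lt_of_lt_of_le one_pos hs1
  have hsq : s ^ 2 = (n : ℝ) := Real.sq_sqrt (Nat.cast_nonneg n)
  set ε : ℝ := 1 / (4 * s) with hεdef
  have hε0 : 0 < ε := by positivity
  have hε4 : ε ≤ 1/4 := by
    rw [hεdef, div_le_div_iff₀ (by positivity) (by norm_num)]
    linarith
  have hnε2 : (n : ℝ) * ε ^ 2 = 1/16 := by
    rw [hεdef, ← hsq]; field_simp; ring
  have hn0 : (0:ℝ) < (n:ℝ) := by exact_mod_cast Nat.lt_of_lt_of_le Nat.zero_lt_one hn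
  set θ1 : Fin 2 → ℝ := ![3/4, 3/4 - ε] with hθ1
  set θ2 : Fin 2 → ℝ := ![3/4 - ε, 3/4] with hθ2
  have h1 : ∀ i, 0 ≤ θ1 i ∧ θ1 i ≤ 1 := by
    rw [Fin.forall_fin_two]
    constructor <;> constructor <;>
      simp only [hθ1, Matrix.cons_val_zero, Matrix.cons_val_one, Matrix.head_cons] <;> linarith
  have h2 : ∀ i, 0 ≤ θ2 i ∧ θ2 i ≤ 1 := by
    rw [Fin.forall_fin_two]
    constructor <;> constructor <;>
      simp only [hθ2, Matrix.cons_val_zero, Matrix.cons_val_one, Matrix.head_cons] <;> linarith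
  set ρ : ℝ := Real.sqrt ((3/4) * (3/4 - ε)) + Real.sqrt ((1/4) * (1/4 + ε)) with hρdef
  have hρ : ∀ i, Real.sqrt (θ1 i * θ2 i) + Real.sqrt ((1 - θ1 i) * (1 - θ2 i)) = ρ := by
    rw [Fin.forall_fin_two]
    constructor
    · simp only [hθ1, hθ2, Matrix.cons_val_zero]
      rw [show ((1:ℝ)-3/4) * (1-(3/4-ε)) = 1/4*(1/4+ε) from by ring, hρdef]
    · simp only [hθ1, hθ2, Matrix.cons_val_one, Matrix.head_cons, Matrix.cons_val_zero]
      rw [show ((3:ℝ)/4-ε) * (3/4) = 3/4*(3/4-ε) from by ring,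
        show ((1:ℝ)-(3/4-ε)) * (1-3/4) = 1/4*(1/4+ε) from by ring, hρdef]
  -- lower bound on ρ
  have hu : (3/4 + (3/4 - ε))/2 - ε^2/4 ≤ Real.sqrt ((3/4) * (3/4 - ε)) := by
    rw [Real.le_sqrt (by nlinarith) (by nlinarith)]
    nlinarith [sq_nonneg ε]
  have hv : ((1/4) + (1/4 + ε))/2 - ε^2/2 ≤ Real.sqrt ((1/4) * (1/4 + ε)) := by
    rw [Real.le_sqrt (by nlinarith) (by nlinarith)]
    nlinarith [sq_nonneg ε, pow_le_pow_left₀ hε0.le hε4 3]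
  have hρlb : 1 - 3*ε^2/4 ≤ ρ := by
    rw [hρdef, show (1:ℝ) - 3*ε^2/4 = ((3/4 + (3/4 - ε))/2 - ε^2/4)
      + (((1/4) + (1/4 + ε))/2 - ε^2/2) from by ring]
    exact add_le_add hu hv
  have hε2 : ε^2 ≤ 1/16 := by nlinarith
  have hbase : (0:ℝ) ≤ 1 - 3*ε^2/4 := by nlinarith
  have hber : (1:ℝ) - 3/64 ≤ (1 - 3*ε^2/4)^n := by
    have h2a : (-2:ℝ) ≤ -(3*ε^2/4) := by nlinarith
    have hBer := one_add_mul_le_pow h2a n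
    have hn' : (n:ℝ) * (3*ε^2/4) = 3/64 := by nlinarith [hnε2]
    have e1 : (1:ℝ) + (n:ℝ) * -(3*ε^2/4) = 1 - 3/64 := by rw [mul_neg]; linarith
    have e2 : (1:ℝ) + -(3*ε^2/4) = 1 - 3*ε^2/4 := by ring
    rw [e1, e2] at hBer
    exact hBer
  have hρn : (61:ℝ)/64 ≤ ρ^n :=
    le_trans (by norm_num) (le_trans hber (pow_le_pow_left₀ hbase hρlb n))
  have hρsq : (9:ℝ)/10 ≤ (ρ^n)^2 :=
    le_trans (by norm_num) (pow_le_pow_left₀ (by norm_num) hρn 2)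
  set A : ℝ := c (3/4) ^ (1/α) with hA
  set B : ℝ := c (3/4 - ε) ^ (1/α) with hB
  set D : ℝ := A + B with hD
  set ta : ℝ := (n:ℝ) * A / D with hta
  set tb : ℝ := (n:ℝ) * B / D with htb
  have hkey := key_ineq (n := n) θ1 θ2 h1 h2 ρ hρ π ta tb
  have hE1 : expDev θ1 π n 0 ta ≤ worstDev c α n π := by
    unfold worstDev
    exact le_trans (le_max_left _ _) (le_max_left _ _)
  have hE2 : expDev θ2 π n 0 tb ≤ worstDev c α n π := by
    unfold worstDev
    exact le_trans (le_max_left _ _) (le_max_right _ _)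
  have h5 : 9/20 * |ta - tb| ≤ expDev θ1 π n 0 ta + expDev θ2 π n 0 tb :=
    le_trans (by nlinarith [abs_nonneg (ta - tb)]) hkey
  linarith [hE1, hE2, h5]

set_option maxHeartbeats 4000000 in
/-- `Ω(√n)` tracking lower bounds for the `ℓ2²`, `ℓ1` and
separation distances: for each of the three parameter maps `c` (with the
corresponding exponent `α`), there are `κ > 0` and `n₀` such that every adaptive
allocation scheme with budget `n ≥ n₀` suffers worst-case expected deviation at
least `κ√n` from the approx-oracle allocation. -/
theorem tracking_lower_bound_sqrt_n :
    (∃ κ : ℝ, 0 < κ ∧ ∃ n0 : ℕ, ∀ n : ℕ, n0 ≤ n →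
        ∀ π : (t : ℕ) → (Fin t → Bool) → Fin 2,
          κ * Real.sqrt n ≤ worstDev (fun p => 1 - p ^ 2 - (1 - p) ^ 2) 1 n π) ∧
    (∃ κ : ℝ, 0 < κ ∧ ∃ n0 : ℕ, ∀ n : ℕ, n0 ≤ n →
        ∀ π : (t : ℕ) → (Fin t → Bool) → Fin 2,
          κ * Real.sqrt n ≤ worstDev (fun p => 2 * Real.sqrt (p * (1 - p))) (1 / 2) n π) ∧
    (∃ κ : ℝ, 0 < κ ∧ ∃ n0 : ℕ, ∀ n : ℕ, n0 ≤ n →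
        ∀ π : (t : ℕ) → (Fin t → Bool) → Fin 2,
          κ * Real.sqrt n ≤ worstDev
            (fun p => Real.sqrt (1 / p - 1) + Real.sqrt (1 / (1 - p) - 1)) (1 / 2) n π) := by
  refine ⟨⟨9/320, by norm_num, 1, fun n hn π => ?_⟩, ⟨9/320, by norm_num, 1, fun n hn π => ?_⟩,
    ⟨27/1280, by norm_num, 1, fun n hn π => ?_⟩⟩
  · -- case ℓ2²
    have hw := worst_bound (fun p => 1 - p ^ 2 - (1 - p) ^ 2) 1 n hn π
    have hs1 : (1:ℝ) ≤ Real.sqrt n := by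
      rw [show (1:ℝ) = Real.sqrt 1 by simp]
      exact Real.sqrt_le_sqrt (by exact_mod_cast hn)
    set s : ℝ := Real.sqrt n with hsdef
    have hs0 : (0:ℝ) < s := lt_of_lt_of_le one_pos hs1
    have hsq : s^2 = (n:ℝ) := Real.sq_sqrt (Nat.cast_nonneg n)
    set ε : ℝ := 1/(4*s) with hεdef
    have hε0 : 0 < ε := by positivity
    have hε4 : ε ≤ 1/4 := by
      rw [hεdef, div_le_div_iff₀ (by positivity) (by norm_num)]; linarith
    have hsε : s * ε = 1/4 := by rw [hεdef]; field_simp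
    have hsε2 : s * ε^2 = ε/4 := by rw [pow_two, ← mul_assoc, hsε]; ring
    have hnε : (n:ℝ) * ε = s/4 := by rw [← hsq, pow_two, mul_assoc, hsε]; ring
    have hnε2 : (n:ℝ) * ε^2 = 1/16 := by rw [← hsq]; nlinarith [hsε]
    simp only [one_div_one, Real.rpow_one] at hw
    rw [show (1:ℝ) - (3/4)^2 - (1-3/4)^2 = 3/8 from by norm_num,
      show (1:ℝ) - (3/4-ε)^2 - (1-(3/4-ε))^2 = 3/8 + ε - 2*ε^2 from by ring] at hw
    have hD0 : (0:ℝ) < 3/8 + (3/8 + ε - 2*ε^2) := by nlinarith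
    have hdiff : (n:ℝ) * (3/8) / (3/8 + (3/8 + ε - 2*ε^2))
        - (n:ℝ) * (3/8 + ε - 2*ε^2) / (3/8 + (3/8 + ε - 2*ε^2))
        = -((n:ℝ) * (ε - 2*ε^2) / (3/8 + (3/8 + ε - 2*ε^2))) := by
      field_simp
      ring
    have hnum : (0:ℝ) ≤ (n:ℝ) * (ε - 2*ε^2) / (3/8 + (3/8 + ε - 2*ε^2)) :=
      div_nonneg (mul_nonneg (Nat.cast_nonneg n) (by nlinarith)) hD0.le
    rw [hdiff, abs_neg, abs_of_nonneg hnum] at hw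
    have hgap : s/8 ≤ (n:ℝ) * (ε - 2*ε^2) / (3/8 + (3/8 + ε - 2*ε^2)) := by
      rw [le_div_iff₀ hD0]
      nlinarith [hsε, hsε2, hnε, hnε2, hs1, hε0.le, hε4]
    linarith [hw, hgap]
  · have hw := worst_bound (fun p => 2 * Real.sqrt (p * (1 - p))) (1/2) n hn π
    have hs1 : (1:ℝ) ≤ Real.sqrt n := by
      rw [show (1:ℝ) = Real.sqrt 1 by simp]
      exact Real.sqrt_le_sqrt (by exact_mod_cast hn)
    set s : ℝ := Real.sqrt n with hsdef
    have hs0 : (0:ℝ) < s := lt_of_lt_of_le one_pos hs1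
    have hsq : s^2 = (n:ℝ) := Real.sq_sqrt (Nat.cast_nonneg n)
    set ε : ℝ := 1/(4*s) with hεdef
    have hε0 : 0 < ε := by positivity
    have hε4 : ε ≤ 1/4 := by
      rw [hεdef, div_le_div_iff₀ (by positivity) (by norm_num)]; linarith
    have hsε : s * ε = 1/4 := by rw [hεdef]; field_simp
    have hsε2 : s * ε^2 = ε/4 := by rw [pow_two, ← mul_assoc, hsε]; ring
    have hnε : (n:ℝ) * ε = s/4 := by rw [← hsq, pow_two, mul_assoc, hsε]; ring
    have hnε2 : (n:ℝ) * ε^2 = 1/16 := by rw [← hsq]; nlinarith [hsε]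
    rw [show (1:ℝ)/(1/2) = (2:ℝ) from by norm_num] at hw
    simp only [Real.rpow_two] at hw
    rw [show (2 * Real.sqrt ((3/4:ℝ) * (1 - 3/4)))^2 = 3/4 from by
        rw [mul_pow, Real.sq_sqrt (by norm_num)]; norm_num,
      show (2 * Real.sqrt (((3/4:ℝ) - ε) * (1 - (3/4 - ε))))^2 = 3/4 + 2*ε - 4*ε^2 from by
        rw [mul_pow, Real.sq_sqrt (by nlinarith)]; ring] at hw
    have hD0 : (0:ℝ) < 3/4 + (3/4 + 2*ε - 4*ε^2) := by nlinarith
    have hdiff : (n:ℝ) * (3/4) / (3/4 + (3/4 + 2*ε - 4*ε^2))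
        - (n:ℝ) * (3/4 + 2*ε - 4*ε^2) / (3/4 + (3/4 + 2*ε - 4*ε^2))
        = -((n:ℝ) * (2*ε - 4*ε^2) / (3/4 + (3/4 + 2*ε - 4*ε^2))) := by
      field_simp
      ring
    have hnum : (0:ℝ) ≤ (n:ℝ) * (2*ε - 4*ε^2) / (3/4 + (3/4 + 2*ε - 4*ε^2)) :=
      div_nonneg (mul_nonneg (Nat.cast_nonneg n) (by nlinarith)) hD0.le
    rw [hdiff, abs_neg, abs_of_nonneg hnum] at hw
    have hgap : s/8 ≤ (n:ℝ) * (2*ε - 4*ε^2) / (3/4 + (3/4 + 2*ε - 4*ε^2)) := by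
      rw [le_div_iff₀ hD0]
      nlinarith [hsε, hsε2, hnε, hnε2, hs1, hε0.le, hε4]
    linarith [hw, hgap]
  · have hw := worst_bound (fun p => Real.sqrt (1/p - 1) + Real.sqrt (1/(1-p) - 1)) (1/2) n hn π
    have hs1 : (1:ℝ) ≤ Real.sqrt n := by
      rw [show (1:ℝ) = Real.sqrt 1 by simp]
      exact Real.sqrt_le_sqrt (by exact_mod_cast hn)
    set s : ℝ := Real.sqrt n with hsdef
    have hs0 : (0:ℝ) < s := lt_of_lt_of_le one_pos hs1
    have hsq : s^2 = (n:ℝ) := Real.sq_sqrt (Nat.cast_nonneg n)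
    set ε : ℝ := 1/(4*s) with hεdef
    have hε0 : 0 < ε := by positivity
    have hε4 : ε ≤ 1/4 := by
      rw [hεdef, div_le_div_iff₀ (by positivity) (by norm_num)]; linarith
    have hsε : s * ε = 1/4 := by rw [hεdef]; field_simp
    have hsε2 : s * ε^2 = ε/4 := by rw [pow_two, ← mul_assoc, hsε]; ring
    have hnε : (n:ℝ) * ε = s/4 := by rw [← hsq, pow_two, mul_assoc, hsε]; ring
    have hnε2 : (n:ℝ) * ε^2 = 1/16 := by rw [← hsq]; nlinarith [hsε]
    have hb1 : (0:ℝ) < 3/4 - ε := by nlinarith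
    have hb2 : (3/4:ℝ) - ε < 1 := by nlinarith
    rw [show (1:ℝ)/(1/2) = (2:ℝ) from by norm_num] at hw
    simp only [Real.rpow_two] at hw
    rw [sep_sq (3/4) (by norm_num) (by norm_num), sep_sq (3/4 - ε) hb1 hb2,
      show (1:ℝ)/((3/4)*(1-3/4)) = 16/3 from by norm_num] at hw
    have hK0 : (0:ℝ) < (3/4 - ε) * (1 - (3/4 - ε)) := by nlinarith
    have hKlb : (3:ℝ)/16 + ε/4 ≤ (3/4 - ε) * (1 - (3/4 - ε)) := by nlinarith
    have hKub : (3/4 - ε) * (1 - (3/4 - ε)) ≤ (5:ℝ)/16 := by nlinarith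
    have hBub : 1/((3/4 - ε) * (1 - (3/4 - ε))) ≤ (16:ℝ)/3 - 4*ε := by
      rw [div_le_iff₀ hK0]
      nlinarith [hKlb, hε0.le, hε4]
    have hB0 : (0:ℝ) < 1/((3/4 - ε) * (1 - (3/4 - ε))) := by positivity
    have hD0 : (0:ℝ) < 16/3 + 1/((3/4 - ε) * (1 - (3/4 - ε))) := by linarith
    have hDub : 16/3 + 1/((3/4 - ε) * (1 - (3/4 - ε))) ≤ (32:ℝ)/3 := by
      nlinarith [hBub, hε0.le]
    have hdiff : (n:ℝ) * (16/3) / (16/3 + 1/((3/4 - ε) * (1 - (3/4 - ε))))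
        - (n:ℝ) * (1/((3/4 - ε) * (1 - (3/4 - ε)))) / (16/3 + 1/((3/4 - ε) * (1 - (3/4 - ε))))
        = (n:ℝ) * (16/3 - 1/((3/4 - ε) * (1 - (3/4 - ε))))
            / (16/3 + 1/((3/4 - ε) * (1 - (3/4 - ε)))) := by
      ring
    have hnum : (0:ℝ) ≤ (n:ℝ) * (16/3 - 1/((3/4 - ε) * (1 - (3/4 - ε))))
        / (16/3 + 1/((3/4 - ε) * (1 - (3/4 - ε)))) :=
      div_nonneg (mul_nonneg (Nat.cast_nonneg n) (by nlinarith [hBub, hε0.le])) hD0.le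
    rw [hdiff, abs_of_nonneg hnum] at hw
    have hgap : 3*s/32 ≤ (n:ℝ) * (16/3 - 1/((3/4 - ε) * (1 - (3/4 - ε))))
        / (16/3 + 1/((3/4 - ε) * (1 - (3/4 - ε)))) := by
      rw [le_div_iff₀ hD0]
      have l1 : 3*s/32 * (16/3 + 1/((3/4 - ε) * (1 - (3/4 - ε)))) ≤ 3*s/32 * (32/3) :=
        mul_le_mul_of_nonneg_left hDub (by positivity)
      have l2 : (n:ℝ) * (4*ε) ≤ (n:ℝ) * (16/3 - 1/((3/4 - ε) * (1 - (3/4 - ε)))) :=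
        mul_le_mul_of_nonneg_left (by linarith [hBub]) (Nat.cast_nonneg n)
      nlinarith [l1, l2, hnε]
    linarith [hw, hgap]
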